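/- For every w ∈ [0,θ·b] one has 0 ≤ γ(w)_i ≤ b_i for all i and θ·γ(w) = w; each coordinate function w ↦ γ(w)_i is nondecreasing on [0,θ·b] and Lipschitz continuous with Lipschitz constant 1/θ_i; in particular γ is continuous on [0,θ·b]. -/
import Mathlib


/-- `B j = b̂_j = Σ_{classes > j} θ_i b_i` (classes are 1-based: class `j` is Fin-index `j-1`). -/
noncomputable def bhat {I : ℕ} (b θ : Fin I → ℝ) (j : ℕ) : ℝ :=
  ∑ i ∈ Finset.univ.filter (fun i : Fin I => j ≤ i.val), θ i * b i

section aux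

variable {I : ℕ} {b θ : Fin I → ℝ}

lemma bhat_anti (hb : ∀ i, 0 < b i) (hθ : ∀ i, 0 < θ i) {j k : ℕ} (h : j ≤ k) :
    bhat b θ k ≤ bhat b θ j := by
  apply Finset.sum_le_sum_of_subset_of_nonneg
  · intro i hi
    simp only [Finset.mem_filter, Finset.mem_univ, true_and] at hi ⊢
    omega
  · intro i _ _
    exact le_of_lt (mul_pos (hθ i) (hb i))

lemma bhat_top : bhat b θ I = 0 := by
  rw [bhat]
  apply Finset.sum_eq_zero
  intro i hi
  simp only [Finset.mem_filter, Finset.mem_univ, true_and] at hi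
  exact absurd hi (by omega)

lemma bhat_zero : bhat b θ 0 = ∑ k, θ k * b k := by
  rw [bhat]
  congr 1
  simp

lemma bhat_succ (i : Fin I) :
    bhat b θ i.val = θ i * b i + bhat b θ (i.val + 1) := by
  rw [bhat, bhat]
  have : Finset.univ.filter (fun k : Fin I => i.val ≤ k.val) =
      insert i (Finset.univ.filter (fun k : Fin I => i.val + 1 ≤ k.val)) := by
    ext k
    simp only [Finset.mem_filter, Finset.mem_univ, true_and, Finset.mem_insert,
      Fin.ext_iff]
    omega
  rw [this, Finset.sum_insert (by simp)]

lemma bhat_nonneg (hb : ∀ i, 0 < b i) (hθ : ∀ i, 0 < θ i) (j : ℕ) :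
    0 ≤ bhat b θ j := by
  apply Finset.sum_nonneg
  intro i _
  exact le_of_lt (mul_pos (hθ i) (hb i))

/-- The closed-form "clamp" expression for `γ`. -/
noncomputable def gclamp (b θ : Fin I → ℝ) (w : ℝ) (i : Fin I) : ℝ :=
  min (b i) (max 0 ((w - bhat b θ (i.val + 1)) / θ i))

lemma gamma_eq_gclamp (hI : 1 ≤ I) (hb : ∀ i, 0 < b i) (hθ : ∀ i, 0 < θ i)
    (γ : ℝ → Fin I → ℝ)
    (hγ : ∀ w : ℝ, 0 ≤ w → w < ∑ k, θ k * b k →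
      ∀ j : ℕ, 1 ≤ j → j ≤ I → bhat b θ j ≤ w → w < bhat b θ (j - 1) →
        γ w = fun i : Fin I =>
          if j ≤ i.val then b i
          else if i.val = j - 1 then (w - bhat b θ j) / θ i else 0)
    (hγtop : γ (∑ k, θ k * b k) = b)
    {w : ℝ} (hw : w ∈ Set.Icc (0:ℝ) (∑ k, θ k * b k)) :
    γ w = gclamp b θ w := by
  obtain ⟨hw0, hwT⟩ := hw
  rcases eq_or_lt_of_le hwT with hT | hT
  · -- top case
    subst hT
    rw [hγtop]
    funext i
    rw [gclamp]
    have h1 : bhat b θ i.val ≤ ∑ k, θ k * b k := by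
      rw [← bhat_zero]; exact bhat_anti hb hθ (Nat.zero_le _)
    have h2 : b i ≤ ((∑ k, θ k * b k) - bhat b θ (i.val + 1)) / θ i := by
      rw [le_div_iff₀ (hθ i)]
      have := bhat_succ (b := b) (θ := θ) i
      nlinarith [hθ i]
    rw [max_eq_right (le_trans (le_of_lt (hb i)) h2), min_eq_left h2]
  · -- interior case: find the unique j
    have hex : ∃ j, bhat b θ j ≤ w := ⟨I, by rw [bhat_top]; exact hw0⟩
    set j := Nat.find hex with hj
    have hjle : bhat b θ j ≤ w := Nat.find_spec hex
    have hj1 : 1 ≤ j := by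
      by_contra h
      have hj0 : j = 0 := by omega
      rw [hj0, bhat_zero] at hjle
      exact absurd hjle (not_le.mpr hT)
    have hjI : j ≤ I := Nat.find_le (by rw [bhat_top]; exact hw0)
    have hjlt : w < bhat b θ (j - 1) := by
      have := Nat.find_min hex (m := j - 1) (by omega)
      exact lt_of_not_ge this
    rw [hγ w hw0 hT j hj1 hjI hjle hjlt]
    funext i
    rw [gclamp]
    by_cases h1 : j ≤ i.val
    · -- full coordinate
      rw [if_pos h1]
      have hBi : bhat b θ i.val ≤ bhat b θ j := bhat_anti hb hθ h1
      have h2 : b i ≤ (w - bhat b θ (i.val + 1)) / θ i := by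
        rw [le_div_iff₀ (hθ i)]
        have := bhat_succ (b := b) (θ := θ) i
        nlinarith [hθ i]
      rw [max_eq_right (le_trans (le_of_lt (hb i)) h2), min_eq_left h2]
    · rw [if_neg h1]
      by_cases h2 : i.val = j - 1
      · rw [if_pos h2]
        have hiv : i.val + 1 = j := by omega
        rw [hiv]
        have hnum0 : 0 ≤ (w - bhat b θ j) / θ i :=
          div_nonneg (by linarith) (le_of_lt (hθ i))
        have hnumb : (w - bhat b θ j) / θ i ≤ b i := by
          rw [div_le_iff₀ (hθ i)]
          have hs := bhat_succ (b := b) (θ := θ) i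
          rw [hiv, h2] at hs
          nlinarith
        rw [max_eq_right hnum0, min_eq_right hnumb]
      · rw [if_neg h2]
        have hle : i.val + 1 ≤ j - 1 := by omega
        have hB : bhat b θ (j - 1) ≤ bhat b θ (i.val + 1) := bhat_anti hb hθ hle
        have hneg : (w - bhat b θ (i.val + 1)) / θ i ≤ 0 :=
          div_nonpos_of_nonpos_of_nonneg (by linarith) (le_of_lt (hθ i))
        rw [max_eq_left hneg, min_eq_right (le_of_lt (hb i))]

end aux

/-- For every `w ∈ [0,θ·b]`, `γ(w)` is feasible (`0 ≤ γ(w)_i ≤ b_i`, `θ·γ(w) = w`);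
each coordinate `w ↦ γ(w)_i` is nondecreasing and Lipschitz with constant `1/θ_i`
on `[0,θ·b]`; in particular `γ` is continuous on `[0,θ·b]`. -/
theorem gamma_monotone_lipschitz_continuous (I : ℕ) (hI : 1 ≤ I)
    (b θ : Fin I → ℝ) (hb : ∀ i, 0 < b i) (hθ : ∀ i, 0 < θ i)
    (γ : ℝ → Fin I → ℝ)
    (hγ : ∀ w : ℝ, 0 ≤ w → w < ∑ k, θ k * b k →
      ∀ j : ℕ, 1 ≤ j → j ≤ I → bhat b θ j ≤ w → w < bhat b θ (j - 1) →
        γ w = fun i : Fin I =>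
          if j ≤ i.val then b i
          else if i.val = j - 1 then (w - bhat b θ j) / θ i else 0)
    (hγtop : γ (∑ k, θ k * b k) = b) :
    (∀ w ∈ Set.Icc (0:ℝ) (∑ k, θ k * b k),
      (∀ i, 0 ≤ γ w i ∧ γ w i ≤ b i) ∧ (∑ i, θ i * γ w i = w)) ∧
    (∀ i : Fin I, MonotoneOn (fun w => γ w i) (Set.Icc (0:ℝ) (∑ k, θ k * b k))) ∧
    (∀ i : Fin I, ∀ u ∈ Set.Icc (0:ℝ) (∑ k, θ k * b k),
      ∀ v ∈ Set.Icc (0:ℝ) (∑ k, θ k * b k),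
        |γ u i - γ v i| ≤ (1 / θ i) * |u - v|) ∧
    ContinuousOn γ (Set.Icc (0:ℝ) (∑ k, θ k * b k)) := by
  have key : ∀ w ∈ Set.Icc (0:ℝ) (∑ k, θ k * b k), γ w = gclamp b θ w :=
    fun w hw => gamma_eq_gclamp hI hb hθ γ hγ hγtop hw
  refine ⟨?_, ?_, ?_, ?_⟩
  · -- feasibility
    intro w hw
    rw [key w hw]
    constructor
    · intro i
      rw [gclamp]
      exact ⟨le_min (le_of_lt (hb i)) (le_max_left _ _), min_le_left _ _⟩
    · -- sum
      have hpt : ∀ i : Fin I, θ i * gclamp b θ w i =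
          min w (bhat b θ i.val) - min w (bhat b θ (i.val + 1)) := by
        intro i
        have hs := bhat_succ (b := b) (θ := θ) i
        have hB2 : 0 ≤ bhat b θ (i.val + 1) := bhat_nonneg hb hθ _
        have hw0 := hw.1
        rw [gclamp]
        rcases le_total w (bhat b θ (i.val + 1)) with h | h
        · have hneg : (w - bhat b θ (i.val + 1)) / θ i ≤ 0 :=
            div_nonpos_of_nonpos_of_nonneg (by linarith) (le_of_lt (hθ i))
          rw [max_eq_left hneg, min_eq_right (le_of_lt (hb i)), min_eq_left h,
            min_eq_left (show w ≤ bhat b θ i.val by nlinarith [hθ i, hb i])]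
          ring
        · rw [min_eq_right h]
          have hmax : max 0 ((w - bhat b θ (i.val + 1)) / θ i) =
              (w - bhat b θ (i.val + 1)) / θ i :=
            max_eq_right (div_nonneg (by linarith) (le_of_lt (hθ i)))
          rw [hmax]
          rcases le_total w (bhat b θ i.val) with h2 | h2
          · rw [min_eq_left h2, min_eq_right]
            · rw [mul_comm]; exact div_mul_cancel₀ _ (ne_of_gt (hθ i))
            · rw [div_le_iff₀ (hθ i)]; nlinarith
          · rw [min_eq_right h2, min_eq_left]
            · linarith [hs]
            · rw [le_div_iff₀ (hθ i)]; nlinarith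
      calc ∑ i, θ i * gclamp b θ w i
          = ∑ i : Fin I, (min w (bhat b θ i.val) - min w (bhat b θ (i.val + 1))) := by
            exact Finset.sum_congr rfl fun i _ => hpt i
        _ = ∑ n ∈ Finset.range I,
              (min w (bhat b θ n) - min w (bhat b θ (n + 1))) := by
            rw [Fin.sum_univ_eq_sum_range (fun n => min w (bhat b θ n) - min w (bhat b θ (n + 1)))]
        _ = min w (bhat b θ 0) - min w (bhat b θ I) := Finset.sum_range_sub' _ _
        _ = w := by
            rw [bhat_top, bhat_zero, min_eq_left hw.2, min_eq_right hw.1]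
            ring
  · -- monotone
    intro i u hu v hv huv
    simp only
    rw [key u hu, key v hv, gclamp, gclamp]
    refine min_le_min le_rfl (max_le_max le_rfl ?_)
    exact (div_le_div_iff_of_pos_right (hθ i)).mpr (by linarith)
  · -- Lipschitz
    intro i u hu v hv
    rw [key u hu, key v hv, gclamp, gclamp]
    calc |min (b i) (max 0 ((u - bhat b θ (i.val + 1)) / θ i)) -
            min (b i) (max 0 ((v - bhat b θ (i.val + 1)) / θ i))|
        ≤ max |b i - b i| |max 0 ((u - bhat b θ (i.val + 1)) / θ i) -
            max 0 ((v - bhat b θ (i.val + 1)) / θ i)| := abs_min_sub_min_le_max _ _ _ _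
      _ ≤ max |b i - b i| |((u - bhat b θ (i.val + 1)) / θ i) -
            ((v - bhat b θ (i.val + 1)) / θ i)| :=
          max_le_max le_rfl (abs_max_sub_max_le_max _ _ _ _ |>.trans (by simp))
      _ ≤ (1 / θ i) * |u - v| := by
          rw [div_sub_div_same, sub_sub_sub_cancel_right, sub_self, abs_zero, abs_div,
            abs_of_pos (hθ i), max_eq_right (div_nonneg (abs_nonneg _) (le_of_lt (hθ i)))]
          rw [one_div_mul_eq_div]
  · -- continuity
    have hcont : Continuous (gclamp b θ) := by
      apply continuous_pi
      intro i
      exact continuous_const.min ((continuous_const.max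
        ((continuous_id.sub continuous_const).div_const _)))
    exact hcont.continuousOn.congr key
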